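/- arXiv:1009.3478 — 2 statements merged into one kernel-verified Lean document; each statement's English description precedes it below -/
import Mathlib

section
/- The polynomial P₄(b,c) = 1 + 3b + 2b² + 3c + 3bc + c² is irreducible in ℂ[b,c]. -/
open MvPolynomial

/-- The polynomial `Y² + (3 + 3X)Y + (1 + 3X + 2X²)` over `ℂ[X]`. -/
noncomputable abbrev P4poly : Polynomial (Polynomial ℂ) :=
  Polynomial.X ^ 2 + Polynomial.C (3 + 3 * Polynomial.X) * Polynomial.X
    + Polynomial.C (1 + 3 * Polynomial.X + 2 * Polynomial.X ^ 2)

lemma P4poly_monic : P4poly.Monic := by unfold P4poly; monicity!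

lemma P4poly_natDegree : P4poly.natDegree = 2 := by unfold P4poly; compute_degree!

lemma no_poly_root (q : Polynomial ℂ) :
    q ^ 2 + (3 + 3 * Polynomial.X) * q + (1 + 3 * Polynomial.X + 2 * Polynomial.X ^ 2) ≠ 0 := by
  intro hF
  have h1 := congrArg (Polynomial.eval (-1 : ℂ)) hF
  have h2 := congrArg (fun p => Polynomial.eval (-1 : ℂ) (Polynomial.derivative p)) hF
  simp [Polynomial.derivative_pow] at h1 h2
  norm_num at h1 h2
  rw [h1] at h2
  norm_num at h2

lemma P4poly_irred : Irreducible P4poly := by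
  rw [P4poly_monic.irreducible_iff_irreducible_map_fraction_map (K := RatFunc ℂ)]
  rw [Polynomial.irreducible_iff_roots_eq_zero_of_degree_le_three]
  · rw [Multiset.eq_zero_iff_forall_notMem]
    intro t ht
    rw [Polynomial.mem_roots ((P4poly_monic.map _).ne_zero)] at ht
    have hroot : Polynomial.aeval t P4poly = 0 := by
      rw [Polynomial.aeval_def, ← Polynomial.eval_map]; exact ht
    have hint : IsIntegral (Polynomial ℂ) t := ⟨P4poly, P4poly_monic, hroot⟩
    obtain ⟨q, hq⟩ := IsIntegrallyClosed.isIntegral_iff.mp hint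
    refine no_poly_root q ?_
    apply IsFractionRing.injective (Polynomial ℂ) (RatFunc ℂ)
    rw [map_zero]
    have h : Polynomial.eval t (P4poly.map (algebraMap (Polynomial ℂ) (RatFunc ℂ))) = 0 :=
      ht
    rw [← hq, Polynomial.eval_map, Polynomial.eval₂_at_apply] at h
    rw [← h]
    simp only [map_add, map_mul, map_pow]
    simp [P4poly]
  · rw [P4poly_monic.natDegree_map]; rw [P4poly_natDegree]
  · rw [P4poly_monic.natDegree_map, P4poly_natDegree]; norm_num

noncomputable def innerEquiv : MvPolynomial (Fin 1) ℂ ≃ₐ[ℂ] Polynomial ℂ :=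
  (renameEquiv ℂ (Equiv.equivPUnit.{1,1} (Fin 1))).trans (pUnitAlgEquiv ℂ)

noncomputable def P4equiv : MvPolynomial (Fin 2) ℂ ≃+* Polynomial (Polynomial ℂ) :=
  (renameEquiv ℂ (Equiv.swap (0 : Fin 2) 1)).toRingEquiv.trans
    ((finSuccEquiv ℂ 1).toRingEquiv.trans (Polynomial.mapEquiv innerEquiv.toRingEquiv))

lemma P4equiv_X0 : P4equiv (X 0) = Polynomial.C Polynomial.X := by
  simp only [P4equiv, RingEquiv.trans_apply, AlgEquiv.toRingEquiv_eq_coe,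
    AlgEquiv.coe_ringEquiv, renameEquiv_apply, rename_X, Equiv.swap_apply_left]
  rw [show ((1:Fin 2)) = Fin.succ 0 from rfl, finSuccEquiv_X_succ]
  simp only [Polynomial.mapEquiv_apply, Polynomial.map_C, innerEquiv, AlgEquiv.trans_apply,
    renameEquiv_apply, rename_X, uniqueAlgEquiv_apply, eval₂_X]
  simp

lemma P4equiv_X1 : P4equiv (X 1) = Polynomial.X := by
  simp only [P4equiv, RingEquiv.trans_apply, AlgEquiv.toRingEquiv_eq_coe,
    AlgEquiv.coe_ringEquiv, renameEquiv_apply, rename_X, Equiv.swap_apply_right,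
    finSuccEquiv_X_zero, Polynomial.mapEquiv_apply, Polynomial.map_X]

/-- The polynomial `P₄(b,c) = 1 + 3b + 2b² + 3c + 3bc + c²` is irreducible in `ℂ[b,c]`.
Here `X 0` plays the role of `b` and `X 1` the role of `c`. -/
theorem P4_irreducible :
    Irreducible ((1 + 3 * X 0 + 2 * X 0 ^ 2 + 3 * X 1 + 3 * X 0 * X 1 + X 1 ^ 2 :
      MvPolynomial (Fin 2) ℂ)) := by
  rw [← MulEquiv.irreducible_iff P4equiv]
  have : P4equiv (1 + 3 * X 0 + 2 * X 0 ^ 2 + 3 * X 1 + 3 * X 0 * X 1 + X 1 ^ 2 :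
      MvPolynomial (Fin 2) ℂ) = P4poly := by
    simp only [map_add, map_mul, map_pow, map_one, map_ofNat, P4equiv_X0, P4equiv_X1]
    unfold P4poly
    simp only [Polynomial.C_add, Polynomial.C_mul, Polynomial.C_pow, map_one, map_ofNat]
    ring
  rw [this]
  exact P4poly_irred
end

section
/- Setting P₃ = 1 + b + c and P₄ = 1 + 3b + 2b² + 3c + 3bc + c², the polynomials P₃ and P₄ are coprime in ℂ[b,c]. -/
open MvPolynomial

private lemma primeX0Fin1 : Prime (X 0 : MvPolynomial (Fin 1) ℂ) := by
  refine (MulEquiv.prime_iff (MvPolynomial.finSuccEquiv ℂ 0).toRingEquiv.toMulEquiv).mp ?_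
  show Prime (MvPolynomial.finSuccEquiv ℂ 0 (X 0))
  rw [finSuccEquiv_X_zero]
  exact Polynomial.prime_X

private lemma primeX1Fin2 : Prime (X 1 : MvPolynomial (Fin 2) ℂ) := by
  refine (MulEquiv.prime_iff (MvPolynomial.finSuccEquiv ℂ 1).toRingEquiv.toMulEquiv).mp ?_
  show Prime (MvPolynomial.finSuccEquiv ℂ 1 (X 1))
  have : (1 : Fin 2) = (0 : Fin 1).succ := rfl
  rw [this, finSuccEquiv_X_succ]
  exact Polynomial.prime_C_iff.mpr primeX0Fin1

/-- `P₃ = 1 + b + c` and `P₄ = 1 + 3b + 2b² + 3c + 3bc + c²` have no common non-unit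
factor in `ℂ[b,c]` (with `X 0 = b`, `X 1 = c`), i.e. they are coprime in the UFD sense. -/
theorem P3_P4_coprime :
    ∀ d : MvPolynomial (Fin 2) ℂ,
      d ∣ (1 + X 0 + X 1) →
      d ∣ (1 + 3 * X 0 + 2 * (X 0)^2 + 3 * X 1 + 3 * (X 0) * (X 1) + (X 1)^2) →
      IsUnit d := by
  intro d h3 h4
  -- d divides (1 + X 0), via the identity (1+b)P₃ + P₃² - P₄ = 1+b
  have hb : d ∣ (1 + X 0 : MvPolynomial (Fin 2) ℂ) := by
    have key : (1 + X 0 : MvPolynomial (Fin 2) ℂ)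
        = (1 + X 0) * (1 + X 0 + X 1) + (1 + X 0 + X 1)^2
          - (1 + 3 * X 0 + 2 * (X 0)^2 + 3 * X 1 + 3 * (X 0) * (X 1) + (X 1)^2) := by
      ring
    rw [key]
    exact dvd_sub (dvd_add (Dvd.dvd.mul_left h3 _) (Dvd.dvd.mul_left h3 _)) h4
  -- hence d divides X 1 = P₃ - (1 + X 0)
  have hc : d ∣ (X 1 : MvPolynomial (Fin 2) ℂ) := by
    have : (X 1 : MvPolynomial (Fin 2) ℂ) = (1 + X 0 + X 1) - (1 + X 0) := by ring
    rw [this]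
    exact dvd_sub h3 hb
  -- X 1 is prime, so d is a unit or associated to X 1
  obtain ⟨e, he⟩ := hc
  rcases primeX1Fin2.irreducible.isUnit_or_isUnit he with h | h
  · exact h
  · exfalso
    -- then X 1 ∣ d ∣ 1 + X 0; evaluate at 0 to get 0 ∣ 1 in ℂ
    have hXd : (X 1 : MvPolynomial (Fin 2) ℂ) ∣ d :=
      ⟨↑h.unit⁻¹, by rw [he, mul_assoc, h.mul_val_inv, mul_one]⟩
    have hX : (X 1 : MvPolynomial (Fin 2) ℂ) ∣ (1 + X 0) := hXd.trans hb
    have := map_dvd (eval (fun _ => (0 : ℂ))) hX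
    simp at this
end
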